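/- Let Φ be an injective IFS and a ∈ Ω_k with no singular connection for (Φ,a). Then the number of itineraries grows subexponentially in a uniform neighborhood: lim_{ε→0⁺} limsup_{n→∞} (1/n)·log #I^{(n)}_{Φ,a}(ε) = 0, where I^{(n)}_{Φ,a}(ε) = ⋃_{|δ|≤ε} I^{(n)}_{Φ,a+δ} and I^{(n)}_{Φ,b} is the set of itineraries of order n of (Φ,b). -/

import Mathlib

open Filter Set Topology
open scoped NNReal

noncomputable def pcIdx {k : ℕ} (hk : 2 ≤ k) (a : Fin (k-1) → ℝ) (x : ℝ) : Fin k :=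
  ⟨(Finset.univ.filter fun i => a i ≤ x).card, by
    have h := Finset.card_filter_le (Finset.univ : Finset (Fin (k-1))) (fun i => a i ≤ x)
    simp only [Finset.card_univ, Fintype.card_fin] at h
    omega⟩

/-- The piecewise contraction `f_{Φ,a}` determined by the IFS `φ` and partition points `a`. -/
noncomputable def pc {k : ℕ} (hk : 2 ≤ k) (φ : Fin k → ℝ → ℝ) (a : Fin (k-1) → ℝ) (x : ℝ) : ℝ :=
  φ (pcIdx hk a x) x

/-- `φ_ω = φ_{ω_n} ∘ ⋯ ∘ φ_{ω_1}`. -/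
def wcomp {k : ℕ} (φ : Fin k → ℝ → ℝ) {n : ℕ} (ω : Fin n → Fin k) (x : ℝ) : ℝ :=
  (List.ofFn ω).foldl (fun y i => φ i y) x

/-- `(Φ,a)` has a singular connection: `φ_ω(S_a) ∩ S_a ≠ ∅` for some nonempty word `ω`. -/
def hasSingConn {k : ℕ} (φ : Fin k → ℝ → ℝ) (a : Fin (k-1) → ℝ) : Prop :=
  ∃ n : ℕ, ∃ ω : Fin (n+1) → Fin k, ∃ i j : Fin (k-1), wcomp φ ω (a i) = a j

/-- `max_i |z i|`. -/
noncomputable def maxAbs {k : ℕ} (hk : 2 ≤ k) (z : Fin k → ℝ) : ℝ :=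
  Finset.univ.sup' (Finset.univ_nonempty_iff.mpr ⟨⟨0, by omega⟩⟩) fun i => |z i|

/-- The set of itineraries of order `n` of `(Φ,a)`. -/
noncomputable def itin {k : ℕ} (hk : 2 ≤ k) (φ : Fin k → ℝ → ℝ) (a : Fin (k-1) → ℝ) (n : ℕ) :
    Set (Fin n → Fin k) :=
  {ω | ∃ x : ℝ, (∀ j < n, (pc hk φ a)^[j] x ∉ Set.range a) ∧
       ∀ j : Fin n, ω j = pcIdx hk a ((pc hk φ a)^[(j : ℕ)] x)}

/-- `I^{(n)}_{Φ,a}(ε) = ⋃_{|δ| ≤ ε} I^{(n)}_{Φ,a+δ}`. -/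
noncomputable def itinE {k : ℕ} (hk : 2 ≤ k) (φ : Fin k → ℝ → ℝ) (a : Fin (k-1) → ℝ)
    (ε : ℝ) (n : ℕ) : Set (Fin n → Fin k) :=
  {ω | ∃ δ : ℝ, |δ| ≤ ε ∧ ω ∈ itin hk φ (fun i => a i + δ) n}

/-- `Ω^ε_{Φ,a} = ⋂_{m ≥ 1} closure (⋃_{n ≥ m} ⋃_{ω ∈ I^{(n)}(ε)} {φ_ω(0)})`. -/
noncomputable def omegaSet {k : ℕ} (hk : 2 ≤ k) (φ : Fin k → ℝ → ℝ) (a : Fin (k-1) → ℝ)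
    (ε : ℝ) : Set ℝ :=
  ⋂ m : ℕ, closure {y : ℝ | ∃ n, m ≤ n ∧ ∃ ω ∈ itinE hk φ a ε n, wcomp φ ω 0 = y}

/-- The ω-limit set of `x` under `f`. -/
def omegaLimitPt (f : ℝ → ℝ) (x : ℝ) : Set ℝ :=
  {y | MapClusterPt y Filter.atTop fun n => f^[n] x}

/-- `f` is asymptotically periodic. -/
def AsympPeriodic (f : ℝ → ℝ) : Prop :=
  {x : ℝ | ∃ p : ℕ, 1 ≤ p ∧ f^[p] x = x}.Finite ∧
  ∀ x : ℝ, ∃ z : ℝ, ∃ p : ℕ, 1 ≤ p ∧ f^[p] z = z ∧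
    omegaLimitPt f x = Set.range fun j : Fin p => f^[(j : ℕ)] z

/-- `f` is asymptotically periodic on the invariant set `s`. -/
def AsympPeriodicOn (f : ℝ → ℝ) (s : Set ℝ) : Prop :=
  {x ∈ s | ∃ p : ℕ, 1 ≤ p ∧ f^[p] x = x}.Finite ∧
  ∀ x ∈ s, ∃ z : ℝ, ∃ p : ℕ, 1 ≤ p ∧ f^[p] z = z ∧
    omegaLimitPt f x = Set.range fun j : Fin p => f^[(j : ℕ)] z

namespace Stmt13

variable {k : ℕ}

lemma wcomp_cons (φ : Fin k → ℝ → ℝ) {n : ℕ} (c : Fin k) (w : Fin n → Fin k) (x : ℝ) :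
    wcomp φ (Fin.cons c w) x = wcomp φ w (φ c x) := by
  simp [wcomp, List.ofFn_succ]

lemma wcomp_lip (φ : Fin k → ℝ → ℝ) {lam : ℝ≥0} (hlam : lam < 1)
    (hlip : ∀ i, LipschitzWith lam (φ i)) :
    ∀ {n : ℕ} (w : Fin n → Fin k) (u v : ℝ), |wcomp φ w u - wcomp φ w v| ≤ |u - v| := by
  intro n
  induction n with
  | zero => intro w u v; simp [wcomp]
  | succ m ih =>
    intro w u v
    rw [← Fin.cons_self_tail w, wcomp_cons, wcomp_cons]
    refine (ih _ _ _).trans ?_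
    have h := (hlip (w 0)).dist_le_mul u v
    rw [Real.dist_eq, Real.dist_eq] at h
    refine h.trans ?_
    have h1 : (lam : ℝ) ≤ 1 := le_of_lt hlam
    nlinarith [abs_nonneg (u - v)]

lemma phi_lip (φ : Fin k → ℝ → ℝ) {lam : ℝ≥0} (hlip : ∀ i, LipschitzWith lam (φ i))
    (c : Fin k) (u v : ℝ) : |φ c u - φ c v| ≤ (lam : ℝ) * |u - v| := by
  have h := (hlip c).dist_le_mul u v
  rwa [Real.dist_eq, Real.dist_eq] at h

lemma iterate_eq_wcomp (hk : 2 ≤ k) (φ : Fin k → ℝ → ℝ) (b : Fin (k-1) → ℝ) (y : ℝ) :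
    ∀ g : ℕ, ∃ w : Fin g → Fin k, (pc hk φ b)^[g] y = wcomp φ w y := by
  intro g
  induction g generalizing y with
  | zero => exact ⟨Fin.elim0, by simp [wcomp]⟩
  | succ m ih =>
    obtain ⟨w, hw⟩ := ih (pc hk φ b y)
    refine ⟨Fin.cons (pcIdx hk b y) w, ?_⟩
    rw [Function.iterate_succ_apply, hw, wcomp_cons]
    rfl



/-- max |a i| -/
noncomputable def aBnd (hk : 2 ≤ k) (a : Fin (k-1) → ℝ) : ℝ :=
  Finset.univ.sup' (Finset.univ_nonempty_iff.mpr ⟨⟨0, by omega⟩⟩) fun i => |a i|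

lemma le_aBnd (hk : 2 ≤ k) (a : Fin (k-1) → ℝ) (i : Fin (k-1)) : |a i| ≤ aBnd hk a :=
  Finset.le_sup' (fun i => |a i|) (Finset.mem_univ i)

lemma aBnd_nonneg (hk : 2 ≤ k) (a : Fin (k-1) → ℝ) : 0 ≤ aBnd hk a :=
  le_trans (abs_nonneg _) (le_aBnd hk a ⟨0, by omega⟩)

lemma le_maxAbs (hk : 2 ≤ k) (z : Fin k → ℝ) (i : Fin k) : |z i| ≤ maxAbs hk z :=
  Finset.le_sup' (fun i => |z i|) (Finset.mem_univ i)

lemma maxAbs_nonneg (hk : 2 ≤ k) (z : Fin k → ℝ) : 0 ≤ maxAbs hk z :=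
  le_trans (abs_nonneg _) (le_maxAbs hk z ⟨0, by omega⟩)

/-- the absorbing radius -/
noncomputable def Mbig (hk : 2 ≤ k) (φ : Fin k → ℝ → ℝ) (lam : ℝ≥0) (a : Fin (k-1) → ℝ) : ℝ :=
  aBnd hk a + maxAbs hk (fun i => φ i 0) / (1 - (lam : ℝ)) + 5

lemma Mbig_ge (hk : 2 ≤ k) (φ : Fin k → ℝ → ℝ) {lam : ℝ≥0} (hlam : lam < 1) (a : Fin (k-1) → ℝ) :
    aBnd hk a + 5 ≤ Mbig hk φ lam a := by
  have h1 : (0:ℝ) < 1 - (lam : ℝ) := by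
    have : (lam : ℝ) < 1 := hlam
    linarith
  have h2 : 0 ≤ maxAbs hk (fun i => φ i 0) / (1 - (lam : ℝ)) :=
    div_nonneg (maxAbs_nonneg _ _) (le_of_lt h1)
  unfold Mbig; linarith

lemma Mbig_pos (hk : 2 ≤ k) (φ : Fin k → ℝ → ℝ) {lam : ℝ≥0} (hlam : lam < 1) (a : Fin (k-1) → ℝ) :
    5 ≤ Mbig hk φ lam a :=
  le_trans (by linarith [aBnd_nonneg hk a]) (Mbig_ge hk φ hlam a)

/-- one-step absorbing estimate -/
lemma absorb_step (hk : 2 ≤ k) (φ : Fin k → ℝ → ℝ) {lam : ℝ≥0} (hlam : lam < 1)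
    (hlip : ∀ i, LipschitzWith lam (φ i)) (a : Fin (k-1) → ℝ) (c : Fin k) (y : ℝ)
    (hy : |y| ≤ Mbig hk φ lam a) : |φ c y| ≤ Mbig hk φ lam a := by
  have h1 : |φ c y - φ c 0| ≤ (lam:ℝ) * |y - 0| := by
    have h := (hlip c).dist_le_mul y 0
    rwa [Real.dist_eq, Real.dist_eq] at h
  have h2 : |φ c 0| ≤ maxAbs hk (fun i => φ i 0) := le_maxAbs hk (fun i => φ i 0) c
  have h3 : |φ c y| ≤ (lam:ℝ) * |y| + maxAbs hk (fun i => φ i 0) := by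
    have := abs_sub_abs_le_abs_sub (φ c y) (φ c 0)
    simp only [sub_zero] at h1
    linarith
  have hlam1 : (lam:ℝ) < 1 := hlam
  have hlam0 : (0:ℝ) ≤ (lam:ℝ) := lam.coe_nonneg
  have h4 : (0:ℝ) < 1 - (lam:ℝ) := by linarith
  have h5 : maxAbs hk (fun i => φ i 0) / (1 - (lam : ℝ)) * (1 - (lam:ℝ)) = maxAbs hk (fun i => φ i 0) :=
    div_mul_cancel₀ _ (ne_of_gt h4)
  -- (1-lam) * Mbig ≥ maxAbs:
  have h6 : maxAbs hk (fun i => φ i 0) ≤ (1 - (lam:ℝ)) * Mbig hk φ lam a := by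
    unfold Mbig
    nlinarith [aBnd_nonneg hk a, maxAbs_nonneg hk (fun i => φ i 0)]
  calc |φ c y| ≤ (lam:ℝ) * |y| + maxAbs hk (fun i => φ i 0) := h3
    _ ≤ (lam:ℝ) * Mbig hk φ lam a + (1 - (lam:ℝ)) * Mbig hk φ lam a := by
        have := mul_le_mul_of_nonneg_left hy hlam0
        linarith
    _ = Mbig hk φ lam a := by ring

/-- minimal separation between distinct partition points -/
noncomputable def gapa (hk : 2 ≤ k) (a : Fin (k-1) → ℝ) : ℝ :=
  Finset.univ.inf' (Finset.univ_nonempty_iff.mpr ⟨(⟨0, by omega⟩, ⟨0, by omega⟩)⟩)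
    fun p : Fin (k-1) × Fin (k-1) => if p.1 = p.2 then 1 else |a p.1 - a p.2|

lemma gapa_pos (hk : 2 ≤ k) (a : Fin (k-1) → ℝ) (ha : StrictMono a) : 0 < gapa hk a := by
  rw [gapa, Finset.lt_inf'_iff]
  rintro ⟨i, j⟩ -
  by_cases h : i = j
  · simp [h]
  · simp only [h, if_false]
    rw [abs_pos, sub_ne_zero]
    exact fun hh => h (ha.injective hh)

lemma gapa_le (hk : 2 ≤ k) (a : Fin (k-1) → ℝ) {i j : Fin (k-1)} (h : i ≠ j) :
    gapa hk a ≤ |a i - a j| := by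
  unfold gapa
  have := Finset.inf'_le (fun p : Fin (k-1) × Fin (k-1) => if p.1 = p.2 then 1 else |a p.1 - a p.2|)
    (Finset.mem_univ (i, j))
  rw [if_neg h] at this
  exact this

/-- minimal distance `|φ_w(a_i) - a_j|` over nonempty words of length ≤ G -/
noncomputable def mG (hk : 2 ≤ k) (φ : Fin k → ℝ → ℝ) (a : Fin (k-1) → ℝ) (G : ℕ) (hG : 0 < G) : ℝ :=
  Finset.univ.inf'
    (Finset.univ_nonempty_iff.mpr
      ⟨⟨⟨⟨0, hG⟩, fun _ => ⟨0, by omega⟩⟩, ⟨0, by omega⟩, ⟨0, by omega⟩⟩⟩)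
    fun q : ((Σ g : Fin G, (Fin (g.1+1) → Fin k)) × (Fin (k-1)) × (Fin (k-1))) =>
      |wcomp φ q.1.2 (a q.2.1) - a q.2.2|

lemma mG_pos (hk : 2 ≤ k) (φ : Fin k → ℝ → ℝ) (a : Fin (k-1) → ℝ) (G : ℕ) (hG : 0 < G)
    (hns : ¬ hasSingConn φ a) : 0 < mG hk φ a G hG := by
  rw [mG, Finset.lt_inf'_iff]
  rintro ⟨⟨g, w⟩, i, j⟩ -
  rw [abs_pos, sub_ne_zero]
  intro hh
  exact hns ⟨g.1, w, i, j, hh⟩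

lemma mG_le (hk : 2 ≤ k) (φ : Fin k → ℝ → ℝ) (a : Fin (k-1) → ℝ) (G : ℕ) (hG : 0 < G)
    {g : ℕ} (hg1 : 0 < g) (hgG : g ≤ G) (w : Fin g → Fin k) (i j : Fin (k-1)) :
    mG hk φ a G hG ≤ |wcomp φ w (a i) - a j| := by
  obtain ⟨g', rfl⟩ : ∃ g', g = g' + 1 := ⟨g - 1, by omega⟩
  exact Finset.inf'_le (fun q : ((Σ g : Fin G, (Fin (g.1+1) → Fin k)) × (Fin (k-1)) × (Fin (k-1))) =>
      |wcomp φ q.1.2 (a q.2.1) - a q.2.2|)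
    (Finset.mem_univ (⟨⟨⟨g', by omega⟩, w⟩, i, j⟩))



section Witness

variable (hk : 2 ≤ k) (φ : Fin k → ℝ → ℝ) (a : Fin (k-1) → ℝ) (lam : ℝ≥0)

/-- orbit of `x` under `f_{Φ,a+δ}` -/
noncomputable def orb (δ x : ℝ) (t : ℕ) : ℝ := (pc hk φ (fun i => a i + δ))^[t] x

/-- the symbol at time `t` -/
noncomputable def symb (δ x : ℝ) (t : ℕ) : Fin k :=
  pcIdx hk (fun i => a i + δ) (orb hk φ a δ x t)

lemma orb_succ (δ x : ℝ) (t : ℕ) :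
    orb hk φ a δ x (t+1) = φ (symb hk φ a δ x t) (orb hk φ a δ x t) := by
  unfold orb symb
  rw [Function.iterate_succ_apply']
  rfl

lemma orb_mod {lam : ℝ≥0} (hlam : lam < 1) (hlip : ∀ i, LipschitzWith lam (φ i))
    (δ x : ℝ) {t₀ t : ℕ} (h : t₀ ≤ t) (h0 : |orb hk φ a δ x t₀| ≤ Mbig hk φ lam a) :
    |orb hk φ a δ x t| ≤ Mbig hk φ lam a := by
  induction t, h using Nat.le_induction with
  | base => exact h0
  | succ m hm ih =>
    rw [orb_succ]
    exact absorb_step hk φ hlam hlip a _ _ ih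

/-- `t` is an event time -/
def isEvt (ε δ x : ℝ) (t : ℕ) : Prop :=
  ∃ j : Fin (k-1), |orb hk φ a δ x t - (a j + δ)| ≤ 3*ε

open Classical in
/-- the event datum at time `t` -/
noncomputable def evt (ε δ x : ℝ) (t : ℕ) : Option (Fin (k-1) × Bool) :=
  if h : isEvt hk φ a ε δ x t then
    some (h.choose, decide (a h.choose + δ ≤ orb hk φ a δ x t)) else none

lemma isEvt_of_evt_eq_some {ε δ x : ℝ} {t : ℕ} {l} (h : evt hk φ a ε δ x t = some l) :
    isEvt hk φ a ε δ x t := by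
  by_contra hn
  rw [evt, dif_neg hn] at h
  exact nomatch h

lemma evt_eq_none_iff {ε δ x : ℝ} {t : ℕ} :
    evt hk φ a ε δ x t = none ↔ ¬ isEvt hk φ a ε δ x t := by
  constructor
  · intro h hE
    rw [evt, dif_pos hE] at h
    exact nomatch h
  · intro h; rw [evt, dif_neg h]

lemma evt_eq_some {ε δ x : ℝ} {t : ℕ} {j : Fin (k-1)} {σ : Bool}
    (h : evt hk φ a ε δ x t = some (j, σ)) :
    |orb hk φ a δ x t - (a j + δ)| ≤ 3*ε ∧
      (open Classical in decide (a j + δ ≤ orb hk φ a δ x t)) = σ := by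
  have hE : isEvt hk φ a ε δ x t := isEvt_of_evt_eq_some hk φ a h
  rw [evt, dif_pos hE] at h
  have h1 := Option.some_injective _ h
  obtain ⟨h2, h3⟩ := Prod.mk.injEq .. ▸ h1
  constructor
  · rw [← h2]; exact hE.choose_spec
  · rw [← h2]; exact h3

open Classical in
/-- first moderate time, if any, within `[0,n)` -/
noncomputable def texit (n : ℕ) (δ x : ℝ) : Option (Fin (n+1)) :=
  if h : ∃ t, t < n ∧ |orb hk φ a δ x t| ≤ Mbig hk φ lam a then
    some ⟨Nat.find h, by have := (Nat.find_spec h).1; omega⟩ else none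

lemma texit_none {n : ℕ} {δ x : ℝ} (h : texit hk φ a lam n δ x = none) :
    ∀ t < n, Mbig hk φ lam a < |orb hk φ a δ x t| := by
  intro t ht
  by_contra hc
  push_neg at hc
  rw [texit, dif_pos ⟨t, ht, hc⟩] at h
  exact nomatch h

lemma texit_some {n : ℕ} {δ x : ℝ} {τ : Fin (n+1)} (h : texit hk φ a lam n δ x = some τ) :
    (τ.1 < n ∧ |orb hk φ a δ x τ.1| ≤ Mbig hk φ lam a) ∧
      ∀ u < τ.1, Mbig hk φ lam a < |orb hk φ a δ x u| := by
  classical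
  rw [texit] at h
  by_cases hex : ∃ t, t < n ∧ |orb hk φ a δ x t| ≤ Mbig hk φ lam a
  case neg => rw [dif_neg hex] at h; exact nomatch h
  rw [dif_pos hex] at h
  · have hval : τ.1 = Nat.find hex := by
      have := Option.some_injective _ h
      rw [← this]
    constructor
    · rw [hval]
      exact ⟨(Nat.find_spec hex).1, (Nat.find_spec hex).2⟩
    · intro u hu
      rw [hval] at hu
      have := Nat.find_min hex hu
      push_neg at this
      by_contra hc
      push_neg at hc
      have hun : u < n := by
        have := Nat.find_spec hex
        omega
      exact absurd (this hun) (not_lt.mpr hc)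

/-- number of cells -/
noncomputable def Ncell (ε : ℝ) : ℕ := ⌊2 * Mbig hk φ lam a / ε⌋₊

noncomputable def cellOf (ε y : ℝ) : Fin (Ncell hk φ a lam ε + 1) :=
  ⟨min ⌊(y + Mbig hk φ lam a) / ε⌋₊ (Ncell hk φ a lam ε), by omega⟩

lemma cellOf_eq {ε y y' : ℝ} (hε0 : 0 < ε)
    (hy : |y| ≤ Mbig hk φ lam a) (hy' : |y'| ≤ Mbig hk φ lam a)
    (h : cellOf hk φ a lam ε y = cellOf hk φ a lam ε y') : |y - y'| < ε := by
  set M := Mbig hk φ lam a with hM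
  have hy2 := abs_le.mp hy
  have hy2' := abs_le.mp hy'
  have hy1 : 0 ≤ y + M := by linarith [hy2.1]
  have hy1' : 0 ≤ y' + M := by linarith [hy2'.1]
  have hb : ⌊(y + M) / ε⌋₊ ≤ Ncell hk φ a lam ε := by
    apply Nat.floor_le_floor
    rw [div_le_div_iff_of_pos_right hε0]
    linarith [hy2.2]
  have hb' : ⌊(y' + M) / ε⌋₊ ≤ Ncell hk φ a lam ε := by
    apply Nat.floor_le_floor
    rw [div_le_div_iff_of_pos_right hε0]
    linarith [hy2'.2]
  have hval : min ⌊(y + M) / ε⌋₊ (Ncell hk φ a lam ε)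
      = min ⌊(y' + M) / ε⌋₊ (Ncell hk φ a lam ε) := congrArg Fin.val h
  have hfl : ⌊(y + M) / ε⌋₊ = ⌊(y' + M) / ε⌋₊ := by omega
  set z := (y + M) / ε with hz
  set z' := (y' + M) / ε with hz'
  have hz1 : (⌊z⌋₊ : ℝ) ≤ z := Nat.floor_le (by positivity)
  have hz2 : z < ⌊z⌋₊ + 1 := Nat.lt_floor_add_one z
  have hz1' : (⌊z'⌋₊ : ℝ) ≤ z' := Nat.floor_le (by positivity)
  have hz2' : z' < ⌊z'⌋₊ + 1 := Nat.lt_floor_add_one z'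
  have hcast : (⌊z⌋₊ : ℝ) = (⌊z'⌋₊ : ℝ) := by rw [hfl]
  have hye : z * ε = y + M := div_mul_cancel₀ _ (ne_of_gt hε0)
  have hye' : z' * ε = y' + M := div_mul_cancel₀ _ (ne_of_gt hε0)
  rw [abs_lt]
  constructor <;> nlinarith [hz1, hz2, hz1', hz2', hcast, hye, hye']

end Witness


/-! ### Event gaps and block encoding -/

lemma findSome?_eq_some_unique {α β : Type _} {f : α → Option β} :
    ∀ (l : List α) (x : α), x ∈ l → ∀ v : β, f x = some v →
      (∀ y ∈ l, y ≠ x → f y = none) → l.findSome? f = some v := by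
  intro l
  induction l with
  | nil => intro x hx; exact absurd hx List.not_mem_nil
  | cons hd tl ih =>
    intro x hx v hv huniq
    rcases List.mem_cons.mp hx with h1 | h1
    · subst h1
      rw [List.findSome?_cons, hv]
    · by_cases hhd : hd = x
      · subst hhd
        rw [List.findSome?_cons, hv]
      · rw [List.findSome?_cons, huniq hd List.mem_cons_self hhd]
        exact ih x h1 v hv fun y hy => huniq y (List.mem_cons_of_mem hd hy)

section Witness2

variable (hk : 2 ≤ k) (φ : Fin k → ℝ → ℝ) (a : Fin (k-1) → ℝ) (lam : ℝ≥0)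

/-- any two event times are more than `G` apart -/
lemma evt_gap {lam : ℝ≥0} (hlam : lam < 1) (hlip : ∀ i, LipschitzWith lam (φ i))
    {G : ℕ} (hG : 0 < G) {ε : ℝ} (hε0 : 0 < ε) (hεm : 9*ε ≤ mG hk φ a G hG)
    {δ x : ℝ} (hδ : |δ| ≤ ε) :
    ∀ {s t : ℕ}, s < t → isEvt hk φ a ε δ x s → isEvt hk φ a ε δ x t → s + G < t := by
  intro s t hst hs ht
  by_contra hle
  push_neg at hle
  obtain ⟨js, hjs⟩ := hs
  obtain ⟨jt, hjt⟩ := ht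
  have hg1 : 0 < t - s := by omega
  have hgG : t - s ≤ G := by omega
  have horb : orb hk φ a δ x t = (pc hk φ (fun i => a i + δ))^[t-s] (orb hk φ a δ x s) := by
    unfold orb
    rw [← Function.iterate_add_apply]
    congr 1
    omega
  obtain ⟨w, hw⟩ := iterate_eq_wcomp hk φ (fun i => a i + δ) (orb hk φ a δ x s) (t-s)
  have l1 : |wcomp φ w (a js) - wcomp φ w (orb hk φ a δ x s)| ≤ |a js - orb hk φ a δ x s| :=
    wcomp_lip φ hlam hlip w _ _
  have l2 : |a js - orb hk φ a δ x s| ≤ 4*ε := by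
    have h1 : a js - orb hk φ a δ x s = -((orb hk φ a δ x s - (a js + δ)) + δ) := by ring
    rw [h1, abs_neg]
    calc |(orb hk φ a δ x s - (a js + δ)) + δ| ≤ |orb hk φ a δ x s - (a js + δ)| + |δ| :=
          abs_add_le _ _
      _ ≤ 4*ε := by linarith
  have l3 : |wcomp φ w (orb hk φ a δ x s) - a jt| ≤ 4*ε := by
    rw [← hw, ← horb]
    have h1 : orb hk φ a δ x t - a jt = (orb hk φ a δ x t - (a jt + δ)) + δ := by ring
    rw [h1]
    calc |(orb hk φ a δ x t - (a jt + δ)) + δ| ≤ |orb hk φ a δ x t - (a jt + δ)| + |δ| :=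
          abs_add_le _ _
      _ ≤ 4*ε := by linarith
  have l4 : |wcomp φ w (a js) - a jt| ≤ 8*ε := by
    calc |wcomp φ w (a js) - a jt|
        ≤ |wcomp φ w (a js) - wcomp φ w (orb hk φ a δ x s)|
          + |wcomp φ w (orb hk φ a δ x s) - a jt| := abs_sub_le _ _ _
      _ ≤ 8*ε := by linarith
  have hm := mG_le hk φ a G hG hg1 hgG w js jt
  linarith

/-- the number of blocks -/
def nb (n G : ℕ) : ℕ := n / (G+1) + 1

noncomputable def evtTr (n : ℕ) (ε δ x : ℝ) (t : ℕ) : Option (Fin (k-1) × Bool) :=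
  if t < n then evt hk φ a ε δ x t else none

noncomputable def blockEnc (n G : ℕ) (ε δ x : ℝ) :
    Fin (nb n G) → Option (Fin (G+1) × (Fin (k-1) × Bool)) :=
  fun i => (List.finRange (G+1)).findSome? fun r =>
    (evtTr hk φ a n ε δ x ((G+1) * i.1 + r.1)).map fun l => (r, l)

/-- if `t < n` is an event time, the block encoding determines it -/
lemma blockEnc_eval {lam : ℝ≥0} (hlam : lam < 1) (hlip : ∀ i, LipschitzWith lam (φ i))
    {G : ℕ} (hG : 0 < G) {ε : ℝ} (hε0 : 0 < ε) (hεm : 9*ε ≤ mG hk φ a G hG)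
    {δ x : ℝ} (hδ : |δ| ≤ ε) {n t : ℕ} (ht : t < n) {l : Fin (k-1) × Bool}
    (hev : evt hk φ a ε δ x t = some l) (hbl : t / (G+1) < nb n G) :
    blockEnc hk φ a n G ε δ x ⟨t / (G+1), hbl⟩
      = some (⟨t % (G+1), Nat.mod_lt _ (by omega)⟩, l) := by
  have hpos : (G+1) * (t / (G+1)) + t % (G+1) = t := Nat.div_add_mod t (G+1)
  apply findSome?_eq_some_unique _ ⟨t % (G+1), Nat.mod_lt _ (by omega)⟩ (List.mem_finRange _)
  · show (evtTr hk φ a n ε δ x ((G+1) * (t / (G+1)) + t % (G+1))).map _ = _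
    rw [hpos, evtTr, if_pos ht, hev]
    rfl
  · intro y _ hy
    show (evtTr hk φ a n ε δ x ((G+1) * (t / (G+1)) + y.1)).map _ = none
    set p := (G+1) * (t / (G+1)) + y.1 with hp
    rw [evtTr]
    by_cases hpn : p < n
    · rw [if_pos hpn]
      have hnone : evt hk φ a ε δ x p = none := by
        rw [evt_eq_none_iff]
        intro hE
        have hEt : isEvt hk φ a ε δ x t := isEvt_of_evt_eq_some hk φ a hev
        have hyx : y.1 ≠ t % (G+1) := fun hc => hy (Fin.ext hc)
        have hpt : p ≠ t := by omega
        have hyb : y.1 < G + 1 := y.2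
        have hmod : t % (G+1) < G + 1 := Nat.mod_lt _ (by omega)
        rcases Nat.lt_or_ge p t with hlt | hge
        · have := evt_gap hk φ a hlam hlip hG hε0 hεm hδ hlt hE hEt
          omega
        · have hlt : t < p := by omega
          have := evt_gap hk φ a hlam hlip hG hε0 hεm hδ hlt hEt hE
          omega
      rw [hnone]
      rfl
    · rw [if_neg hpn]
      rfl

end Witness2


section Dyn

variable (hk : 2 ≤ k) (φ : Fin k → ℝ → ℝ) (a : Fin (k-1) → ℝ) (lam : ℝ≥0)

lemma pcIdx_congr (b b' : Fin (k-1) → ℝ) (y y' : ℝ) (h : ∀ i, b i ≤ y ↔ b' i ≤ y') :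
    pcIdx hk b y = pcIdx hk b' y' := by
  apply Fin.ext
  show (Finset.univ.filter fun i => b i ≤ y).card = (Finset.univ.filter fun i => b' i ≤ y').card
  congr 1
  apply Finset.filter_congr
  intro i _
  simp only [h i]

lemma signAgree (hlam : lam < 1) (hlip : ∀ i, LipschitzWith lam (φ i))
    (hinj : ∀ i, Function.Injective (φ i)) {δ δ' x x' : ℝ}
    (hsg : (0 ≤ x) ↔ (0 ≤ x')) :
    ∀ t, (∀ u ≤ t, Mbig hk φ lam a < |orb hk φ a δ x u| ∧ Mbig hk φ lam a < |orb hk φ a δ' x' u|) →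
      (∀ u < t, symb hk φ a δ x u = symb hk φ a δ' x' u) →
      ((Mbig hk φ lam a < orb hk φ a δ x t ∧ Mbig hk φ lam a < orb hk φ a δ' x' t) ∨
       (orb hk φ a δ x t < -(Mbig hk φ lam a) ∧ orb hk φ a δ' x' t < -(Mbig hk φ lam a))) := by
  have hM5 : (5:ℝ) ≤ Mbig hk φ lam a := Mbig_pos hk φ hlam a
  intro t
  induction t with
  | zero =>
    intro hdeep _
    have hd := hdeep 0 (le_refl 0)
    have hx0 : orb hk φ a δ x 0 = x := rfl
    have hx0' : orb hk φ a δ' x' 0 = x' := rfl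
    rw [hx0, hx0'] at hd ⊢
    by_cases h0 : 0 ≤ x
    · left
      have h0' : 0 ≤ x' := hsg.mp h0
      constructor
      · rcases lt_abs.mp hd.1 with h | h
        · exact h
        · linarith
      · rcases lt_abs.mp hd.2 with h | h
        · exact h
        · linarith
    · right
      have h0' : ¬ (0 ≤ x') := fun hc => h0 (hsg.mpr hc)
      push_neg at h0 h0'
      constructor
      · rcases lt_abs.mp hd.1 with h | h
        · linarith
        · linarith
      · rcases lt_abs.mp hd.2 with h | h
        · linarith
        · linarith
  | succ m ih =>
    intro hdeep hsymb
    have hprev := ih (fun u hu => hdeep u (le_trans hu (Nat.le_succ m)))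
      (fun u hu => hsymb u (Nat.lt_succ_of_lt hu))
    have hc' : symb hk φ a δ' x' m = symb hk φ a δ x m := (hsymb m (Nat.lt_succ_self m)).symm
    set c := symb hk φ a δ x m with hcdef
    have hx1 : orb hk φ a δ x (m+1) = φ c (orb hk φ a δ x m) := orb_succ hk φ a δ x m
    have hx2 : orb hk φ a δ' x' (m+1) = φ c (orb hk φ a δ' x' m) := by
      rw [orb_succ hk φ a δ' x' m, hc']
    have hMnn : (0:ℝ) ≤ Mbig hk φ lam a := by linarith
    have hφM : |φ c (Mbig hk φ lam a)| ≤ Mbig hk φ lam a :=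
      absorb_step hk φ hlam hlip a c _ (by rw [abs_of_nonneg hMnn])
    have hφM' : |φ c (-(Mbig hk φ lam a))| ≤ Mbig hk φ lam a :=
      absorb_step hk φ hlam hlip a c _ (by rw [abs_neg, abs_of_nonneg hMnn])
    have hdm := hdeep (m+1) (le_refl _)
    have hφMa := abs_le.mp hφM
    have hφMa' := abs_le.mp hφM'
    rcases Continuous.strictMono_of_inj (hlip c).continuous (hinj c) with hmono | hanti
    · rcases hprev with ⟨h1, h2⟩ | ⟨h1, h2⟩
      · left
        have e1 : φ c (Mbig hk φ lam a) < φ c (orb hk φ a δ x m) := hmono h1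
        have e2 : φ c (Mbig hk φ lam a) < φ c (orb hk φ a δ' x' m) := hmono h2
        constructor
        · rcases lt_abs.mp hdm.1 with h | h
          · exact h
          · rw [hx1] at h; exfalso; linarith [hφMa.1]
        · rcases lt_abs.mp hdm.2 with h | h
          · exact h
          · rw [hx2] at h; exfalso; linarith [hφMa.1]
      · right
        have e1 : φ c (orb hk φ a δ x m) < φ c (-(Mbig hk φ lam a)) := hmono h1
        have e2 : φ c (orb hk φ a δ' x' m) < φ c (-(Mbig hk φ lam a)) := hmono h2
        constructor
        · rcases lt_abs.mp hdm.1 with h | h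
          · rw [hx1] at h; exfalso; linarith [hφMa'.2]
          · rw [hx1]; linarith
        · rcases lt_abs.mp hdm.2 with h | h
          · rw [hx2] at h; exfalso; linarith [hφMa'.2]
          · rw [hx2]; linarith
    · rcases hprev with ⟨h1, h2⟩ | ⟨h1, h2⟩
      · right
        have e1 : φ c (orb hk φ a δ x m) < φ c (Mbig hk φ lam a) := hanti h1
        have e2 : φ c (orb hk φ a δ' x' m) < φ c (Mbig hk φ lam a) := hanti h2
        constructor
        · rcases lt_abs.mp hdm.1 with h | h
          · rw [hx1] at h; exfalso; linarith [hφMa.2]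
          · rw [hx1]; linarith
        · rcases lt_abs.mp hdm.2 with h | h
          · rw [hx2] at h; exfalso; linarith [hφMa.2]
          · rw [hx2]; linarith
      · left
        have e1 : φ c (-(Mbig hk φ lam a)) < φ c (orb hk φ a δ x m) := hanti h1
        have e2 : φ c (-(Mbig hk φ lam a)) < φ c (orb hk φ a δ' x' m) := hanti h2
        constructor
        · rcases lt_abs.mp hdm.1 with h | h
          · exact h
          · rw [hx1] at h; exfalso; linarith [hφMa'.1]
        · rcases lt_abs.mp hdm.2 with h | h
          · exact h
          · rw [hx2] at h; exfalso; linarith [hφMa'.1]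

lemma offsetAgree (hlam : lam < 1) (hlip : ∀ i, LipschitzWith lam (φ i))
    {δ δ' x x' ε : ℝ} (hε0 : 0 < ε) (τ₀ : ℕ)
    (hbase : |orb hk φ a δ x τ₀ - orb hk φ a δ' x' τ₀| ≤ ε) :
    ∀ t, τ₀ ≤ t → (∀ u, τ₀ ≤ u → u < t → symb hk φ a δ x u = symb hk φ a δ' x' u) →
      |orb hk φ a δ x t - orb hk φ a δ' x' t| ≤ ε := by
  intro t ht
  induction t, ht using Nat.le_induction with
  | base => intro _; exact hbase
  | succ m hm ih =>
    intro hsymb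
    have h1 := ih (fun u hu1 hu2 => hsymb u hu1 (by omega))
    have hc := hsymb m hm (Nat.lt_succ_self m)
    rw [orb_succ hk φ a δ x m, orb_succ hk φ a δ' x' m, hc]
    have h2 := phi_lip φ hlip (symb hk φ a δ' x' m) (orb hk φ a δ x m) (orb hk φ a δ' x' m)
    have hlam1 : (lam:ℝ) ≤ 1 := le_of_lt hlam
    have h3 := abs_nonneg (orb hk φ a δ x m - orb hk φ a δ' x' m)
    nlinarith

end Dyn


section Cert

variable (hk : 2 ≤ k) (φ : Fin k → ℝ → ℝ) (a : Fin (k-1) → ℝ) (lam : ℝ≥0)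

lemma evt_agree (hlam : lam < 1) (hlip : ∀ i, LipschitzWith lam (φ i))
    {G : ℕ} (hG : 0 < G) {ε : ℝ} (hε0 : 0 < ε) (hεm : 9*ε ≤ mG hk φ a G hG)
    {δ δ' x x' : ℝ} (hδ : |δ| ≤ ε) (hδ' : |δ'| ≤ ε) {n : ℕ}
    (hbe : blockEnc hk φ a n G ε δ x = blockEnc hk φ a n G ε δ' x') :
    ∀ t < n, evt hk φ a ε δ x t = evt hk φ a ε δ' x' t := by
  have key : ∀ (δ₁ δ₂ x₁ x₂ : ℝ), |δ₁| ≤ ε →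
      blockEnc hk φ a n G ε δ₁ x₁ = blockEnc hk φ a n G ε δ₂ x₂ →
      ∀ t < n, ∀ l, evt hk φ a ε δ₁ x₁ t = some l → evt hk φ a ε δ₂ x₂ t = some l := by
    intro δ₁ δ₂ x₁ x₂ h1 hbe12 t ht l hev
    have hbl : t / (G+1) < nb n G := by
      have h2 : t / (G+1) ≤ n / (G+1) := Nat.div_le_div_right (Nat.le_of_lt ht)
      unfold nb; omega
    have he1 := blockEnc_eval hk φ a hlam hlip hG hε0 hεm h1 ht hev hbl
    rw [hbe12] at he1
    obtain ⟨r, _, hfr⟩ := List.exists_of_findSome?_eq_some he1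
    cases hev2 : evtTr hk φ a n ε δ₂ x₂ ((G+1) * (t / (G+1)) + r.1) with
    | none => rw [hev2] at hfr; exact absurd hfr (by simp)
    | some l2 =>
      rw [hev2] at hfr
      simp only [Option.map_some] at hfr
      have h3 := Option.some_injective _ hfr
      have hr1 : r.1 = t % (G+1) := congrArg (fun p => (Prod.fst p).1) h3
      have hr2 : l2 = l := congrArg Prod.snd h3
      have hpos : (G+1) * (t / (G+1)) + r.1 = t := by
        have := Nat.div_add_mod t (G+1); omega
      rw [hpos, evtTr, if_pos ht] at hev2
      rw [hev2, hr2]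
  intro t ht
  cases hev : evt hk φ a ε δ x t with
  | some l => exact (key δ δ' x x' hδ hbe t ht l hev).symm
  | none =>
    cases hev' : evt hk φ a ε δ' x' t with
    | none => rfl
    | some l =>
      have := key δ' δ x' x hδ' hbe.symm t ht l hev'
      rw [this] at hev
      exact absurd hev (by simp)

open Classical in
noncomputable def cert (n G : ℕ) (ε δ x : ℝ) :
    Option (Fin (n+1)) × Bool × Fin (Ncell hk φ a lam ε + 1)
      × (Fin (nb n G) → Option (Fin (G+1) × (Fin (k-1) × Bool))) :=
  (texit hk φ a lam n δ x,
   decide (0 ≤ x),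
   (match texit hk φ a lam n δ x with
    | none => ⟨0, by omega⟩
    | some τ => cellOf hk φ a lam ε (orb hk φ a δ x τ.1)),
   blockEnc hk φ a n G ε δ x)

lemma symb_agree (hlam : lam < 1) (hlip : ∀ i, LipschitzWith lam (φ i))
    (hinj : ∀ i, Function.Injective (φ i)) (ha : StrictMono a)
    {G : ℕ} (hG : 0 < G) {ε : ℝ} (hε0 : 0 < ε) (hε1 : ε ≤ 1)
    (hεγ : 10*ε ≤ gapa hk a) (hεm : 9*ε ≤ mG hk φ a G hG)
    {δ δ' x x' : ℝ} (hδ : |δ| ≤ ε) (hδ' : |δ'| ≤ ε) {n : ℕ}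
    (hcert : cert hk φ a lam n G ε δ x = cert hk φ a lam n G ε δ' x') :
    ∀ t < n, symb hk φ a δ x t = symb hk φ a δ' x' t := by
  have hτ : texit hk φ a lam n δ x = texit hk φ a lam n δ' x' :=
    congrArg (fun p => p.1) hcert
  have hsgB : (decide (0 ≤ x) : Bool) = decide (0 ≤ x') := congrArg (fun p => p.2.1) hcert
  have hsg : (0 ≤ x) ↔ (0 ≤ x') := decide_eq_decide.mp hsgB
  have hcell := congrArg (fun p => p.2.2.1) hcert
  have hbe : blockEnc hk φ a n G ε δ x = blockEnc hk φ a n G ε δ' x' :=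
    congrArg (fun p => p.2.2.2) hcert
  have hevt := evt_agree hk φ a lam hlam hlip hG hε0 hεm hδ hδ' hbe
  have hδδ' : |δ - δ'| ≤ 2*ε := by
    calc |δ - δ'| ≤ |δ| + |δ'| := abs_sub _ _
      _ ≤ 2*ε := by linarith
  have hδa := abs_le.mp hδ
  have hδa' := abs_le.mp hδ'
  have hMge := Mbig_ge hk φ hlam a
  -- shared deep-phase symbol argument
  have deepSymb : ∀ t < n,
      ((Mbig hk φ lam a < orb hk φ a δ x t ∧ Mbig hk φ lam a < orb hk φ a δ' x' t) ∨
       (orb hk φ a δ x t < -(Mbig hk φ lam a) ∧ orb hk φ a δ' x' t < -(Mbig hk φ lam a))) →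
      symb hk φ a δ x t = symb hk φ a δ' x' t := by
    intro t _ hsa
    apply pcIdx_congr
    intro i
    have hai := abs_le.mp (le_aBnd hk a i)
    rcases hsa with ⟨h1, h2⟩ | ⟨h1, h2⟩
    · constructor <;> intro _ <;> linarith
    · constructor <;> intro hcon <;> exfalso <;> linarith
  intro t
  induction t using Nat.strong_induction_on with
  | _ t IH =>
  intro ht
  cases hτx : texit hk φ a lam n δ x with
  | none =>
    have hτx' : texit hk φ a lam n δ' x' = none := hτ ▸ hτx
    have hdeep := texit_none hk φ a lam hτx
    have hdeep' := texit_none hk φ a lam hτx'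
    have hsa := signAgree hk φ a lam hlam hlip hinj hsg t
      (fun u hu => ⟨hdeep u (by omega), hdeep' u (by omega)⟩)
      (fun u hu => IH u hu (by omega))
    exact deepSymb t ht hsa
  | some τ =>
    have hτx' : texit hk φ a lam n δ' x' = some τ := hτ ▸ hτx
    have hs := texit_some hk φ a lam hτx
    have hs' := texit_some hk φ a lam hτx'
    by_cases htτ : t < τ.1
    · have hsa := signAgree hk φ a lam hlam hlip hinj hsg t
        (fun u hu => ⟨hs.2 u (by omega), hs'.2 u (by omega)⟩)
        (fun u hu => IH u hu (by omega))
      exact deepSymb t ht hsa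
    · push_neg at htτ
      have hcell2 : cellOf hk φ a lam ε (orb hk φ a δ x τ.1)
          = cellOf hk φ a lam ε (orb hk φ a δ' x' τ.1) := by
        have := hcell
        simp only [cert, hτx, hτx'] at this
        exact this
      have hbase : |orb hk φ a δ x τ.1 - orb hk φ a δ' x' τ.1| ≤ ε :=
        le_of_lt (cellOf_eq hk φ a lam hε0 hs.1.2 hs'.1.2 hcell2)
      have hoff := offsetAgree hk φ a lam hlam hlip hε0 τ.1 hbase t htτ
        (fun u hu1 hu2 => IH u hu2 (by omega))
      cases hev : evt hk φ a ε δ x t with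
      | none =>
        have hnE : ¬ isEvt hk φ a ε δ x t := (evt_eq_none_iff hk φ a).mp hev
        simp only [isEvt, not_exists, not_le] at hnE
        apply pcIdx_congr
        intro i
        have hfar := hnE i
        have hoffa := abs_le.mp hoff
        rcases lt_abs.mp hfar with hgt | hgt
        · constructor <;> intro _ <;> linarith
        · rw [neg_sub] at hgt
          constructor <;> intro hcon <;> exfalso <;> linarith
      | some l =>
        obtain ⟨j, σ⟩ := l
        have hev' : evt hk φ a ε δ' x' t = some (j, σ) := (hevt t ht) ▸ hev
        obtain ⟨hj, hσ⟩ := evt_eq_some hk φ a hev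
        obtain ⟨hj', hσ'⟩ := evt_eq_some hk φ a hev'
        have hja := abs_le.mp hj
        have hja' := abs_le.mp hj'
        apply pcIdx_congr
        intro i
        by_cases hij : i = j
        · subst hij
          exact decide_eq_decide.mp (hσ.trans hσ'.symm)
        · have hgap := gapa_le hk a hij
          have hane : a i ≠ a j := fun hc => hij (ha.injective hc)
          rcases lt_or_gt_of_ne hane with hij2 | hij2
          · have h1 : gapa hk a ≤ a j - a i := by
              rw [abs_of_neg (by linarith : a i - a j < 0)] at hgap
              linarith
            constructor <;> intro _ <;> linarith
          · have h1 : gapa hk a ≤ a i - a j := by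
              rw [abs_of_pos (by linarith : 0 < a i - a j)] at hgap
              linarith
            constructor <;> intro hcon <;> exfalso <;> linarith

end Cert


section Count

variable (hk : 2 ≤ k) (φ : Fin k → ℝ → ℝ) (a : Fin (k-1) → ℝ) (lam : ℝ≥0)

lemma itinE_witness {ε : ℝ} {n : ℕ} {ω : Fin n → Fin k} (h : ω ∈ itinE hk φ a ε n) :
    ∃ δ : ℝ, ∃ x : ℝ, |δ| ≤ ε ∧ ∀ j : Fin n, ω j = symb hk φ a δ x j := by
  obtain ⟨δ, hδ, x, _, hsym⟩ := h
  exact ⟨δ, x, hδ, hsym⟩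

noncomputable def certOf (n G : ℕ) (ε : ℝ) (ω : ↥(itinE hk φ a ε n)) :
    Option (Fin (n+1)) × Bool × Fin (Ncell hk φ a lam ε + 1)
      × (Fin (nb n G) → Option (Fin (G+1) × (Fin (k-1) × Bool))) :=
  cert hk φ a lam n G ε (itinE_witness hk φ a ω.2).choose
    (itinE_witness hk φ a ω.2).choose_spec.choose

lemma certOf_inj (hlam : lam < 1) (hlip : ∀ i, LipschitzWith lam (φ i))
    (hinj : ∀ i, Function.Injective (φ i)) (ha : StrictMono a)
    {G : ℕ} (hG : 0 < G) {ε : ℝ} (hε0 : 0 < ε) (hε1 : ε ≤ 1)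
    (hεγ : 10*ε ≤ gapa hk a) (hεm : 9*ε ≤ mG hk φ a G hG) (n : ℕ) :
    Function.Injective (certOf hk φ a lam n G ε) := by
  intro ω ω' h
  obtain ⟨hδ, hsym⟩ := (itinE_witness hk φ a ω.2).choose_spec.choose_spec
  obtain ⟨hδ', hsym'⟩ := (itinE_witness hk φ a ω'.2).choose_spec.choose_spec
  have hagree := symb_agree hk φ a lam hlam hlip hinj ha hG hε0 hε1 hεγ hεm hδ hδ' h
  apply Subtype.ext
  funext j
  rw [hsym j, hsym' j, hagree j.1 j.2]

lemma card_itinE_le (hlam : lam < 1) (hlip : ∀ i, LipschitzWith lam (φ i))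
    (hinj : ∀ i, Function.Injective (φ i)) (ha : StrictMono a)
    {G : ℕ} (hG : 0 < G) {ε : ℝ} (hε0 : 0 < ε) (hε1 : ε ≤ 1)
    (hεγ : 10*ε ≤ gapa hk a) (hεm : 9*ε ≤ mG hk φ a G hG) (n : ℕ) :
    Nat.card ↥(itinE hk φ a ε n)
      ≤ (n+2) * (2 * ((Ncell hk φ a lam ε + 1)
          * ((G+1) * ((k-1)*2) + 1) ^ (nb n G))) := by
  have h1 := Nat.card_le_card_of_injective _
    (certOf_inj hk φ a lam hlam hlip hinj ha hG hε0 hε1 hεγ hεm n)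
  refine h1.trans (le_of_eq ?_)
  rw [Nat.card_eq_fintype_card]
  simp [Fintype.card_prod, Fintype.card_option, Fintype.card_fun, Fintype.card_bool]

lemma card_itinE_le_pow (ε : ℝ) (n : ℕ) : Nat.card ↥(itinE hk φ a ε n) ≤ k ^ n := by
  have h1 : Nat.card ↥(itinE hk φ a ε n) ≤ Nat.card (Fin n → Fin k) :=
    Nat.card_le_card_of_injective (fun ω => ω.1) Subtype.val_injective
  simpa [Nat.card_eq_fintype_card, Fintype.card_fun] using h1

end Count


section Analytic

lemma tendsto_log_nat_div : Filter.Tendsto (fun n : ℕ => Real.log n / n) atTop (nhds 0) :=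
  (Real.isLittleO_log_id_atTop.tendsto_div_nhds_zero).comp tendsto_natCast_atTop_atTop

lemma exists_goodG (c : ℝ) (hc : 0 < c) (C : ℝ) :
    ∃ m : ℕ, 2 ≤ m ∧ (Real.log m + C) / m < c := by
  have h1 : Filter.Tendsto (fun m : ℕ => Real.log m / m + C / m) atTop (nhds 0) := by
    have := tendsto_log_nat_div.add (tendsto_const_div_atTop_nhds_zero_nat C)
    simpa using this
  have h2 : Filter.Tendsto (fun m : ℕ => (Real.log m + C) / m) atTop (nhds 0) := by
    refine h1.congr fun m => ?_
    rw [add_div]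
  obtain ⟨m, hm1, hm2⟩ := ((eventually_ge_atTop 2).and (h2.eventually_lt_const hc)).exists
  exact ⟨m, hm1, hm2⟩

lemma tendsto_logshift (C : ℝ) :
    Filter.Tendsto (fun n : ℕ => (Real.log (n+2) + C) / n) atTop (nhds 0) := by
  have t1 : Filter.Tendsto (fun n : ℕ => Real.log ((n:ℝ)+2) / ((n:ℝ)+2)) atTop (nhds 0) := by
    have hcomp : Filter.Tendsto (fun n : ℕ => ((n:ℝ)+2)) atTop atTop :=
      tendsto_atTop_add_const_right _ 2 tendsto_natCast_atTop_atTop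
    exact (Real.isLittleO_log_id_atTop.tendsto_div_nhds_zero).comp hcomp
  have t2 : Filter.Tendsto (fun n : ℕ => ((n:ℝ)+2) / n) atTop (nhds 1) := by
    have hbase : Filter.Tendsto (fun n : ℕ => 1 + 2 / (n:ℝ)) atTop (nhds 1) := by
      have := (tendsto_const_nhds (x := (1:ℝ)) (f := atTop (α := ℕ))).add
        (tendsto_const_div_atTop_nhds_zero_nat 2)
      simpa using this
    refine hbase.congr' ?_
    filter_upwards [eventually_ge_atTop 1] with n hn
    have hn0 : (n:ℝ) ≠ 0 := by positivity
    field_simp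
  have t3 : Filter.Tendsto (fun n : ℕ => Real.log ((n:ℝ)+2) / n) atTop (nhds 0) := by
    have := t1.mul t2
    rw [zero_mul] at this
    refine this.congr' ?_
    filter_upwards [eventually_ge_atTop 1] with n hn
    have hn0 : (n:ℝ) ≠ 0 := by positivity
    have hn2 : ((n:ℝ)+2) ≠ 0 := by positivity
    field_simp
  have t4 := t3.add (tendsto_const_div_atTop_nhds_zero_nat C)
  rw [add_zero] at t4
  refine t4.congr fun n => ?_
  rw [add_div]

end Analytic


section LimsupBound

variable (hk : 2 ≤ k) (φ : Fin k → ℝ → ℝ) (a : Fin (k-1) → ℝ) (lam : ℝ≥0)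

lemma limsup_small (hlam : lam < 1) (hlip : ∀ i, LipschitzWith lam (φ i))
    (hinj : ∀ i, Function.Injective (φ i)) (ha : StrictMono a)
    {G : ℕ} (hG : 0 < G) {ε : ℝ} (hε0 : 0 < ε) (hε1 : ε ≤ 1)
    (hεγ : 10*ε ≤ gapa hk a) (hεm : 9*ε ≤ mG hk φ a G hG)
    {η : ℝ} (hη : 0 < η)
    (hGgood : Real.log ((((G+1) * ((k-1)*2) + 1 : ℕ)) : ℝ) / ((G:ℝ)+1) < η/4) :
    Filter.limsup (fun n : ℕ => Real.log (Nat.card ↥(itinE hk φ a ε n)) / n) atTop ≤ η/2 ∧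
      0 ≤ Filter.limsup (fun n : ℕ => Real.log (Nat.card ↥(itinE hk φ a ε n)) / n) atTop := by
  set f : ℕ → ℝ := fun n => Real.log (Nat.card ↥(itinE hk φ a ε n)) / n with hf
  have hf0 : ∀ n, 0 ≤ f n := fun n =>
    div_nonneg (Real.log_natCast_nonneg _) (Nat.cast_nonneg n)
  have hfk : ∀ n, f n ≤ Real.log k := by
    intro n
    have hlogk : 0 ≤ Real.log (k:ℝ) := Real.log_natCast_nonneg k
    rcases Nat.eq_zero_or_pos n with rfl | hn
    · simpa [hf] using hlogk
    · rcases Nat.eq_zero_or_pos (Nat.card ↥(itinE hk φ a ε n)) with h0 | h1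
      · have : f n = 0 := by simp only [hf, h0, Nat.cast_zero, Real.log_zero, zero_div]
        rw [this]; exact hlogk
      · have hcard := card_itinE_le_pow hk φ a ε n
        have hlog : Real.log (Nat.card ↥(itinE hk φ a ε n)) ≤ n * Real.log k := by
          calc Real.log (Nat.card ↥(itinE hk φ a ε n))
              ≤ Real.log ((k:ℝ)^n) :=
                Real.log_le_log (by exact_mod_cast h1) (by exact_mod_cast hcard)
            _ = n * Real.log k := by rw [Real.log_pow]
        have hn0 : (0:ℝ) < n := by exact_mod_cast hn
        rw [hf]
        rw [div_le_iff₀ hn0]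
        linarith [hlog]
  set Nc1 : ℕ := Ncell hk φ a lam ε + 1 with hNc1
  set Bb : ℕ := (G+1) * ((k-1)*2) + 1 with hBb
  have hBb1 : 1 ≤ Bb := by omega
  have hNc1pos : (0:ℝ) < (Nc1:ℝ) := by exact_mod_cast Nat.succ_pos _
  have hBbpos : (0:ℝ) < (Bb:ℝ) := by exact_mod_cast hBb1
  have hlogBb : 0 ≤ Real.log (Bb:ℝ) := Real.log_natCast_nonneg _
  have hlogNc1 : 0 ≤ Real.log (Nc1:ℝ) := Real.log_natCast_nonneg _
  have hlog2 : 0 ≤ Real.log (2:ℝ) := Real.log_nonneg (by norm_num)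
  set C2 : ℝ := Real.log 2 + Real.log (Nc1:ℝ) + Real.log (Bb:ℝ) with hC2
  have hC2pos : 0 ≤ C2 := by rw [hC2]; linarith
  have hGpos : (0:ℝ) < (G:ℝ)+1 := by positivity
  have hkey : ∀ n : ℕ, 1 ≤ n →
      f n ≤ (Real.log ((n:ℝ)+2) + C2)/n + Real.log (Bb:ℝ)/((G:ℝ)+1) := by
    intro n hn
    have hn0 : (0:ℝ) < n := by exact_mod_cast hn
    have hlogn2 : 0 ≤ Real.log ((n:ℝ)+2) :=
      Real.log_nonneg (by linarith [Nat.cast_nonneg (α := ℝ) n])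
    rcases Nat.eq_zero_or_pos (Nat.card ↥(itinE hk φ a ε n)) with h0 | h1
    · have hz : f n = 0 := by simp only [hf, h0, Nat.cast_zero, Real.log_zero, zero_div]
      rw [hz]
      positivity
    · have hcard := card_itinE_le hk φ a lam hlam hlip hinj ha hG hε0 hε1 hεγ hεm n
      have hre : ((((n+2) * (2 * (Nc1 * Bb ^ (nb n G))) : ℕ)) : ℝ)
          = ((n:ℝ)+2) * (2 * ((Nc1:ℝ) * (Bb:ℝ) ^ (nb n G))) := by push_cast; ring
      have hpow : (0:ℝ) < (Bb:ℝ) ^ (nb n G) := pow_pos hBbpos _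
      have hlog : Real.log (Nat.card ↥(itinE hk φ a ε n))
          ≤ Real.log ((n:ℝ)+2) + Real.log 2 + Real.log (Nc1:ℝ)
            + (nb n G) * Real.log (Bb:ℝ) := by
        have hstep : Real.log (Nat.card ↥(itinE hk φ a ε n))
            ≤ Real.log (((n+2) * (2 * (Nc1 * Bb ^ (nb n G))) : ℕ) : ℝ) := by
          apply Real.log_le_log (by exact_mod_cast h1)
          exact_mod_cast hcard
        rw [hre] at hstep
        rw [Real.log_mul (by positivity) (by positivity),
            Real.log_mul (by norm_num) (by positivity),
            Real.log_mul (by positivity) (by positivity), Real.log_pow] at hstep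
        linarith [hstep]
      have hnb : ((nb n G : ℕ) : ℝ) ≤ (n:ℝ)/((G:ℝ)+1) + 1 := by
        have h2 := Nat.cast_div_le (m := n) (n := G+1) (α := ℝ)
        have h3 : ((G+1 : ℕ) : ℝ) = (G:ℝ)+1 := by push_cast; ring
        rw [h3] at h2
        unfold nb
        push_cast
        linarith
      have hdiv : f n ≤ (Real.log ((n:ℝ)+2) + Real.log 2 + Real.log (Nc1:ℝ)
          + (nb n G) * Real.log (Bb:ℝ))/n := by
        rw [hf]
        rw [div_le_div_iff_of_pos_right hn0]
        exact hlog
      have hsplit : ((nb n G : ℕ) : ℝ) * Real.log (Bb:ℝ) / n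
          ≤ Real.log (Bb:ℝ)/((G:ℝ)+1) + Real.log (Bb:ℝ)/n := by
        have h2 : ((nb n G : ℕ) : ℝ) * Real.log (Bb:ℝ)
            ≤ ((n:ℝ)/((G:ℝ)+1) + 1) * Real.log (Bb:ℝ) :=
          mul_le_mul_of_nonneg_right hnb hlogBb
        have h3 : (((n:ℝ)/((G:ℝ)+1) + 1) * Real.log (Bb:ℝ))/n
            = Real.log (Bb:ℝ)/((G:ℝ)+1) + Real.log (Bb:ℝ)/n := by
          field_simp
        calc ((nb n G : ℕ) : ℝ) * Real.log (Bb:ℝ) / n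
            ≤ (((n:ℝ)/((G:ℝ)+1) + 1) * Real.log (Bb:ℝ))/n := by
              rw [div_le_div_iff_of_pos_right hn0]
              exact h2
          _ = _ := h3
      have hfin : (Real.log ((n:ℝ)+2) + Real.log 2 + Real.log (Nc1:ℝ)
            + (nb n G) * Real.log (Bb:ℝ))/n
          = (Real.log ((n:ℝ)+2) + Real.log 2 + Real.log (Nc1:ℝ))/n
            + ((nb n G : ℕ) : ℝ) * Real.log (Bb:ℝ)/n := by
        ring
      have hfin2 : (Real.log ((n:ℝ)+2) + Real.log 2 + Real.log (Nc1:ℝ))/n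
            + (Real.log (Bb:ℝ)/((G:ℝ)+1) + Real.log (Bb:ℝ)/n)
          = (Real.log ((n:ℝ)+2) + C2)/n + Real.log (Bb:ℝ)/((G:ℝ)+1) := by
        rw [hC2]
        ring
      rw [hfin] at hdiv
      linarith [hdiv, hsplit]
  have hev : ∀ᶠ n : ℕ in atTop, f n ≤ η/2 := by
    have ht := (tendsto_logshift C2).eventually_lt_const (show (0:ℝ) < η/4 by linarith)
    filter_upwards [ht, eventually_ge_atTop 1] with n h1 h2
    have h3 := hkey n h2
    have hBb4 : Real.log (Bb:ℝ)/((G:ℝ)+1) < η/4 := hGgood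
    linarith
  constructor
  · exact Filter.limsup_le_of_le (Filter.isCoboundedUnder_le_of_le atTop hf0) hev
  · exact Filter.le_limsup_of_frequently_le
      ((Filter.Eventually.of_forall hf0).frequently)
      (Filter.isBoundedUnder_of_eventually_le (Filter.Eventually.of_forall hfk))

end LimsupBound

end Stmt13

theorem stmt13 {k : ℕ} (hk : 2 ≤ k) (φ : Fin k → ℝ → ℝ) (lam : ℝ≥0) (hlam : lam < 1)
    (hlip : ∀ i, LipschitzWith lam (φ i)) (hinj : ∀ i, Function.Injective (φ i))
    (a : Fin (k-1) → ℝ) (ha : StrictMono a) (hns : ¬ hasSingConn φ a) :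
    Filter.Tendsto
      (fun ε : ℝ => Filter.limsup
        (fun n : ℕ => Real.log (Nat.card ↥(itinE hk φ a ε n)) / n) Filter.atTop)
      (nhdsWithin 0 (Set.Ioi 0)) (nhds 0) := by
  rw [Metric.tendsto_nhdsWithin_nhds]
  intro η hη
  obtain ⟨m, hm2, hmlt⟩ := Stmt13.exists_goodG (η/4) (by linarith) (Real.log ((2*k : ℕ) : ℝ))
  set G := m - 1 with hGdef
  have hG : 0 < G := by omega
  have hm : m = G + 1 := by omega
  have hGgood : Real.log ((((G+1) * ((k-1)*2) + 1 : ℕ)) : ℝ) / ((G:ℝ)+1) < η/4 := by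
    have hle : ((G+1) * ((k-1)*2) + 1 : ℕ) ≤ (G+1) * (2*k) := by
      have h1 : (k-1)*2 + 2 = 2*k := by omega
      calc (G+1) * ((k-1)*2) + 1 ≤ (G+1) * ((k-1)*2) + (G+1)*2 := by
            have : 1 ≤ (G+1)*2 := by omega
            omega
        _ = (G+1) * ((k-1)*2 + 2) := by ring
        _ = (G+1) * (2*k) := by rw [h1]
    have hcast : (((G+1) * (2*k) : ℕ) : ℝ) = ((G+1 : ℕ):ℝ) * ((2*k : ℕ):ℝ) := by push_cast; ring
    have hpos1 : (0:ℝ) < (((G+1) * ((k-1)*2) + 1 : ℕ) : ℝ) := by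
      have : (1:ℕ) ≤ (G+1) * ((k-1)*2) + 1 := by omega
      exact_mod_cast lt_of_lt_of_le zero_lt_one (by exact_mod_cast this)
    have hlog : Real.log ((((G+1) * ((k-1)*2) + 1 : ℕ)) : ℝ)
        ≤ Real.log (((G+1 : ℕ):ℝ)) + Real.log (((2*k : ℕ):ℝ)) := by
      have step : Real.log ((((G+1) * ((k-1)*2) + 1 : ℕ)) : ℝ)
          ≤ Real.log ((((G+1) * (2*k) : ℕ)) : ℝ) :=
        Real.log_le_log hpos1 (by exact_mod_cast hle)
      rw [hcast] at step
      rw [Real.log_mul (by positivity) ?h2] at step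
      · exact step
      case h2 =>
        have : (1:ℕ) ≤ 2*k := by omega
        have : (1:ℝ) ≤ ((2*k : ℕ):ℝ) := by exact_mod_cast this
        linarith
    have hGm : ((G:ℝ)+1) = ((m:ℕ):ℝ) := by rw [hm]; push_cast; ring
    have hGpos : (0:ℝ) < (G:ℝ)+1 := by positivity
    have hfinal : (Real.log (((G+1 : ℕ):ℝ)) + Real.log (((2*k : ℕ):ℝ)))/((G:ℝ)+1) < η/4 := by
      have hGm2 : (((G+1 : ℕ)):ℝ) = ((m:ℕ):ℝ) := by rw [hm]
      rw [hGm2, hGm]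
      exact hmlt
    calc Real.log ((((G+1) * ((k-1)*2) + 1 : ℕ)) : ℝ) / ((G:ℝ)+1)
        ≤ (Real.log (((G+1 : ℕ):ℝ)) + Real.log (((2*k : ℕ):ℝ)))/((G:ℝ)+1) := by
          rw [div_le_div_iff_of_pos_right hGpos]
          exact hlog
      _ < η/4 := hfinal
  have hγpos := Stmt13.gapa_pos hk a ha
  have hmGpos := Stmt13.mG_pos hk φ a G hG hns
  refine ⟨min 1 (min (Stmt13.gapa hk a / 10) (Stmt13.mG hk φ a G hG / 9)),
    lt_min one_pos (lt_min (by linarith) (by linarith)), ?_⟩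
  intro ε hεI hdist
  have hε0 : (0:ℝ) < ε := Set.mem_Ioi.mp hεI
  rw [Real.dist_eq, sub_zero, abs_of_pos hε0] at hdist
  have h1' : ε < 1 := lt_of_lt_of_le hdist (min_le_left _ _)
  have h2' : ε < Stmt13.gapa hk a / 10 :=
    lt_of_lt_of_le hdist ((min_le_right _ _).trans (min_le_left _ _))
  have h3' : ε < Stmt13.mG hk φ a G hG / 9 :=
    lt_of_lt_of_le hdist ((min_le_right _ _).trans (min_le_right _ _))
  obtain ⟨hub, hlb⟩ := Stmt13.limsup_small hk φ a lam hlam hlip hinj ha hG hε0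
    (le_of_lt h1') (by linarith) (by linarith) hη hGgood
  rw [Real.dist_eq, sub_zero, abs_of_nonneg hlb]
  linarith
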